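/- In F_529 (the field with 529 elements, q = 23), for every a ∈ F_529* with a⁸ = -1, the map f(x) = a·x + x^67 is a permutation of F_529. -/

import Mathlib

instance fact23 : Fact (Nat.Prime 23) := ⟨by norm_num⟩

structure F529 where
  re : ZMod 23
  im : ZMod 23
deriving DecidableEq

namespace F529

def equivProd : F529 ≃ ZMod 23 × ZMod 23 where
  toFun x := (x.re, x.im)
  invFun p := ⟨p.1, p.2⟩
  left_inv _ := rfl
  right_inv _ := rfl

instance : Fintype F529 := Fintype.ofEquiv _ equivProd.symm

instance : Zero F529 := ⟨⟨0, 0⟩⟩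
instance : One F529 := ⟨⟨1, 0⟩⟩
instance : Add F529 := ⟨fun x y => ⟨x.re + y.re, x.im + y.im⟩⟩
instance : Neg F529 := ⟨fun x => ⟨-x.re, -x.im⟩⟩
instance : Mul F529 := ⟨fun x y => ⟨x.re * y.re + 5 * (x.im * y.im), x.re * y.im + x.im * y.re⟩⟩
instance : Inv F529 := ⟨fun x => ⟨x.re * (x.re ^ 2 - 5 * x.im ^ 2)⁻¹, -x.im * (x.re ^ 2 - 5 * x.im ^ 2)⁻¹⟩⟩

@[simp] lemma zero_re : (0 : F529).re = 0 := rfl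
@[simp] lemma zero_im : (0 : F529).im = 0 := rfl
@[simp] lemma one_re : (1 : F529).re = 1 := rfl
@[simp] lemma one_im : (1 : F529).im = 0 := rfl
@[simp] lemma add_re (x y : F529) : (x + y).re = x.re + y.re := rfl
@[simp] lemma add_im (x y : F529) : (x + y).im = x.im + y.im := rfl
@[simp] lemma neg_re (x : F529) : (-x).re = -x.re := rfl
@[simp] lemma neg_im (x : F529) : (-x).im = -x.im := rfl
@[simp] lemma mul_re (x y : F529) : (x * y).re = x.re * y.re + 5 * (x.im * y.im) := rfl
@[simp] lemma mul_im (x y : F529) : (x * y).im = x.re * y.im + x.im * y.re := rfl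
@[simp] lemma inv_re (x : F529) : (x⁻¹).re = x.re * (x.re ^ 2 - 5 * x.im ^ 2)⁻¹ := rfl
@[simp] lemma inv_im (x : F529) : (x⁻¹).im = -x.im * (x.re ^ 2 - 5 * x.im ^ 2)⁻¹ := rfl

lemma ext' {x y : F529} (h1 : x.re = y.re) (h2 : x.im = y.im) : x = y := by
  cases x; cases y; cases h1; cases h2; rfl

lemma five_not_sq : ∀ c : ZMod 23, c ^ 2 ≠ 5 := by decide

lemma disc_ne (a b : ZMod 23) (h : ¬(a = 0 ∧ b = 0)) : a ^ 2 - 5 * b ^ 2 ≠ 0 := by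
  intro hd
  rcases eq_or_ne b 0 with hb | hb
  · subst hb
    have ha : a ≠ 0 := fun h0 => h ⟨h0, rfl⟩
    apply ha
    have h2 : a ^ 2 = 0 := by linear_combination hd
    exact pow_eq_zero_iff (two_ne_zero) |>.mp h2
  · apply five_not_sq (a / b)
    field_simp
    linear_combination hd

instance instField : Field F529 :=
  Field.ofMinimalAxioms F529
    (fun a b c => ext' (by simp; ring) (by simp; ring))
    (fun a => ext' (by simp) (by simp))
    (fun a => ext' (by simp) (by simp))
    (fun a b c => ext' (by simp; ring) (by simp; ring))
    (fun a b => ext' (by simp; ring) (by simp; ring))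
    (fun a => ext' (by simp) (by simp))
    (by
      intro x h
      have hab : ¬(x.re = 0 ∧ x.im = 0) := by
        rintro ⟨h1, h2⟩; exact h (ext' h1 h2)
      have hd := disc_ne x.re x.im hab
      refine ext' ?_ ?_ <;> simp <;> field_simp <;> ring)
    (ext' (by simp) (by simp))
    (fun a b c => ext' (by simp; ring) (by simp; ring))
    ⟨0, 1, by intro h; simpa using congrArg re h⟩

lemma card_F529 : Fintype.card F529 = 529 := by
  rw [Fintype.card_congr equivProd]
  simp [Fintype.card_prod, ZMod.card]

end F529

namespace F529

def pow8 (a : F529) : F529 :=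
  let b := a * a
  let c := b * b
  c * c

def f (a x : F529) : F529 :=
  let y := x * x
  let z := y * y
  let w := z * z
  let v := w * w
  let u := v * v
  let t := u * u
  a * x + t * y * x

lemma pow8_eq (a : F529) : pow8 a = a ^ 8 := by simp only [pow8]; ring

lemma f_eq (a x : F529) : f a x = a * x + x ^ 67 := by simp only [f]; ring


def enc (x : F529) : ℕ := x.re.val + 23 * x.im.val

def dec (n : ℕ) : F529 := ⟨(n : ZMod 23), ((n / 23 : ℕ) : ZMod 23)⟩

def mask (a : F529) : ℕ :=
  (List.range 529).foldl (fun acc n => acc ||| 1 <<< enc (f a (dec n))) 0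

lemma enc_lt (x : F529) : enc x < 529 := by
  have h1 := ZMod.val_lt x.re
  have h2 := ZMod.val_lt x.im
  unfold enc; omega

lemma enc_inj {x y : F529} (h : enc x = enc y) : x = y := by
  have h1 := ZMod.val_lt x.re
  have h2 := ZMod.val_lt x.im
  have h3 := ZMod.val_lt y.re
  have h4 := ZMod.val_lt y.im
  unfold enc at h
  refine ext' (ZMod.val_injective 23 ?_) (ZMod.val_injective 23 ?_) <;> omega

lemma foldl_test (g : ℕ → ℕ) (m : ℕ) :
    ∀ (l : List ℕ) (acc : ℕ),
      Nat.testBit (l.foldl (fun acc n => acc ||| 1 <<< g n) acc) m = true →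
      Nat.testBit acc m = true ∨ ∃ n ∈ l, g n = m := by
  intro l
  induction l with
  | nil => intro acc h; exact Or.inl h
  | cons x xs ih =>
    intro acc h
    rcases ih _ h with h' | ⟨n, hn, hg⟩
    · rw [Nat.testBit_or, Bool.or_eq_true] at h'
      rcases h' with h' | h'
      · exact Or.inl h'
      · rw [Nat.one_shiftLeft, Nat.testBit_two_pow, decide_eq_true_eq] at h'
        exact Or.inr ⟨x, List.mem_cons_self, h'⟩
    · exact Or.inr ⟨n, List.mem_cons_of_mem _ hn, hg⟩

lemma surj_of_mask (a : F529) (h : mask a = 2 ^ 529 - 1) : Function.Surjective (f a) := by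
  intro y
  have ht : Nat.testBit (mask a) (enc y) = true := by
    rw [h, Nat.testBit_two_pow_sub_one, decide_eq_true_eq]
    exact enc_lt y
  rcases foldl_test (fun n => enc (f a (dec n))) (enc y) (List.range 529) 0 ht with h0 | ⟨n, _, hg⟩
  · simp [Nat.zero_testBit] at h0
  · exact ⟨dec n, enc_inj hg⟩

set_option maxRecDepth 100000 in
set_option maxHeartbeats 40000000 in
lemma key : ∀ a : F529, pow8 a = -1 → mask a = 2 ^ 529 - 1 := by decide

lemma bij (a : F529) (h : a ^ 8 = -1) :
    Function.Bijective (fun x : F529 => a * x + x ^ 67) := by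
  have hs : Function.Surjective (f a) := surj_of_mask a (key a (by rw [pow8_eq]; exact h))
  have : (fun x : F529 => a * x + x ^ 67) = f a := by
    funext x; rw [f_eq]
  rw [this]
  exact Finite.surjective_iff_bijective.mp hs

end F529


theorem perm_q_twentythree
    (F : Type*) [Field F] [Fintype F] (hF : Fintype.card F = 529)
    (a : F) (ha : a ≠ 0)
    (hroot : a ^ 8 = -1) :
    Function.Bijective (fun x : F => a * x + x ^ 67) := by
  have e : F ≃+* F529 := FiniteField.ringEquivOfCardEq (by rw [hF, F529.card_F529])
  have hb : (e a) ^ 8 = -1 := by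
    rw [← map_pow, hroot, map_neg, map_one]
  have hK := F529.bij (e a) hb
  have hcomp : (fun x : F => a * x + x ^ 67)
      = (e.symm ∘ (fun x : F529 => e a * x + x ^ 67) ∘ e) := by
    funext x
    simp only [Function.comp_apply, ← map_pow, ← map_mul, ← map_add,
      RingEquiv.symm_apply_apply]
  rw [hcomp]
  exact e.symm.bijective.comp (hK.comp e.bijective)
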